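/- If x ∈ GL₆(𝕂) satisfies: the lower right 4×2 corner block of x has rank 1 and the lower right 2×2 corner block of x has rank 1, then x_right·x does not belong to Lie(P)·x + x·Lie(P)^τ. -/
import Mathlib


open Matrix

/-- The Lie algebra of the parabolic `P ⊆ GL₆(𝕂)`: block upper triangular `6 × 6`
matrices with respect to the partition `(2,2,2)` of `6`. -/
def LieP (𝕂 : Type*) [RCLike 𝕂] : Set (Matrix (Fin 6) (Fin 6) 𝕂) :=
  {p | ∀ i j : Fin 6, (j : ℕ) / 2 < (i : ℕ) / 2 → p i j = 0}

/-- `Lie(P)^τ`, the image of `Lie(P)` under matrix transpose. -/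
def LiePtau (𝕂 : Type*) [RCLike 𝕂] : Set (Matrix (Fin 6) (Fin 6) 𝕂) :=
  {q | qᵀ ∈ LieP 𝕂}

/-- The block matrix `x_left = [[0,I₂,0],[0,0,I₂],[0,0,0]]` (2×2 blocks). -/
def xLeft (𝕂 : Type*) [RCLike 𝕂] : Matrix (Fin 6) (Fin 6) 𝕂 :=
  Matrix.of fun i j => if (j : ℕ) = (i : ℕ) + 2 then 1 else 0

/-- `x_right = x_left^τ`. -/
def xRight (𝕂 : Type*) [RCLike 𝕂] : Matrix (Fin 6) (Fin 6) 𝕂 := (xLeft 𝕂)ᵀ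

/-- The set `Lie(P)·x + x·Lie(P)^τ = {p·x + x·q : p ∈ Lie(P), q ∈ Lie(P)^τ}`. -/
def tanSet {𝕂 : Type*} [RCLike 𝕂] (x : Matrix (Fin 6) (Fin 6) 𝕂) :
    Set (Matrix (Fin 6) (Fin 6) 𝕂) :=
  {m | ∃ p ∈ LieP 𝕂, ∃ q ∈ LiePtau 𝕂, m = p * x + x * q}

/-- The lower right `i × j` corner block of a `6 × 6` matrix. -/
def corner {𝕂 : Type*} [RCLike 𝕂] (i j : ℕ) (hi : i ≤ 6) (hj : j ≤ 6)
    (x : Matrix (Fin 6) (Fin 6) 𝕂) : Matrix (Fin i) (Fin j) 𝕂 :=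
  Matrix.of fun a b =>
    x ⟨6 - i + a.1, by have := a.2; omega⟩ ⟨6 - j + b.1, by have := b.2; omega⟩

/-- The rank matrix `R(x) = [[r₄ₓ₄(x), r₄ₓ₂(x)], [r₂ₓ₄(x), r₂ₓ₂(x)]]`, where
`r_{i×j}(x)` is the rank of the lower right `i × j` corner block of `x`. -/
noncomputable def rankMatrix {𝕂 : Type*} [RCLike 𝕂] (x : Matrix (Fin 6) (Fin 6) 𝕂) :
    Matrix (Fin 2) (Fin 2) ℕ :=
  !![(corner 4 4 (by norm_num) (by norm_num) x).rank,
     (corner 4 2 (by norm_num) (by norm_num) x).rank;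
     (corner 2 4 (by norm_num) (by norm_num) x).rank,
     (corner 2 2 (by norm_num) (by norm_num) x).rank]

lemma ker_of_rank_one {𝕂 : Type*} [RCLike 𝕂] {m : ℕ} (M : Matrix (Fin m) (Fin 2) 𝕂)
    (h : M.rank = 1) : ∃ w : Fin 2 → 𝕂, w ≠ 0 ∧ M *ᵥ w = 0 := by
  have h1 := LinearMap.finrank_range_add_finrank_ker M.mulVecLin
  rw [Module.finrank_fintype_fun_eq_card] at h1
  have hM : Module.finrank 𝕂 (LinearMap.ker M.mulVecLin) = 1 := by
    have : M.rank = Module.finrank 𝕂 (LinearMap.range M.mulVecLin) := rfl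
    rw [this] at h
    simp [h, Fintype.card_fin] at h1
    omega
  have hne : LinearMap.ker M.mulVecLin ≠ ⊥ := by
    intro hbot
    rw [hbot] at hM
    simp at hM
  obtain ⟨w, hwmem, hw0⟩ := Submodule.exists_mem_ne_zero_of_ne_bot hne
  exact ⟨w, hw0, hwmem⟩

lemma smul_of_ker_rank_one {𝕂 : Type*} [RCLike 𝕂] (N : Matrix (Fin 2) (Fin 2) 𝕂)
    (h : N.rank = 1) {w y : Fin 2 → 𝕂} (hw : w ≠ 0) (hNw : N *ᵥ w = 0)
    (hNy : N *ᵥ y = 0) : ∃ c : 𝕂, y = c • w := by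
  have h1 := LinearMap.finrank_range_add_finrank_ker N.mulVecLin
  rw [Module.finrank_fintype_fun_eq_card] at h1
  have hker : Module.finrank 𝕂 (LinearMap.ker N.mulVecLin) = 1 := by
    have : N.rank = Module.finrank 𝕂 (LinearMap.range N.mulVecLin) := rfl
    rw [this] at h
    simp [h, Fintype.card_fin] at h1
    omega
  have hle : Submodule.span 𝕂 {w} ≤ LinearMap.ker N.mulVecLin := by
    rw [Submodule.span_singleton_le_iff_mem, LinearMap.mem_ker, mulVecLin_apply]
    exact hNw
  have hspan : Submodule.span 𝕂 {w} = LinearMap.ker N.mulVecLin := by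
    apply Submodule.eq_of_le_of_finrank_le hle
    rw [hker, finrank_span_singleton hw]
  have hy : y ∈ Submodule.span 𝕂 {w} := by
    rw [hspan, LinearMap.mem_ker, mulVecLin_apply]; exact hNy
  obtain ⟨c, hc⟩ := Submodule.mem_span_singleton.mp hy
  exact ⟨c, hc.symm⟩

lemma xRight_mulVec {𝕂 : Type*} [RCLike 𝕂] (v : Fin 6 → 𝕂) :
    xRight 𝕂 *ᵥ v = ![0, 0, v 0, v 1, v 2, v 3] := by
  have c0 : ((0 : Fin 6) : ℕ) = 0 := rfl
  have c1 : ((1 : Fin 6) : ℕ) = 1 := rfl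
  have c2 : ((2 : Fin 6) : ℕ) = 2 := rfl
  have c3 : ((3 : Fin 6) : ℕ) = 3 := rfl
  have c4 : ((4 : Fin 6) : ℕ) = 4 := rfl
  have c5 : ((5 : Fin 6) : ℕ) = 5 := rfl
  funext i
  fin_cases i <;>
    norm_num [xRight, xLeft, Matrix.mulVec, dotProduct, Fin.sum_univ_six,
      c0, c1, c2, c3, c4, c5]

/-- If `x ∈ GL₆(𝕂)` has lower right `4 × 2` corner block of rank `1` and lower right
`2 × 2` corner block of rank `1`, then `x_right·x ∉ Lie(P)·x + x·Lie(P)^τ`. -/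
theorem xRight_transversal_of_second_column_one_one {𝕂 : Type*} [RCLike 𝕂]
    (x : Matrix (Fin 6) (Fin 6) 𝕂) (hx : IsUnit x.det)
    (h42 : (corner 4 2 (by norm_num) (by norm_num) x).rank = 1)
    (h22 : (corner 2 2 (by norm_num) (by norm_num) x).rank = 1) :
    xRight 𝕂 * x ∉ tanSet x := by
  rintro ⟨p, hp, q, hq, heq⟩
  obtain ⟨w, hw0, hMw⟩ := ker_of_rank_one _ h42
  have k2 : x 2 4 * w 0 + x 2 5 * w 1 = 0 := by
    have := congrFun hMw 0
    simpa [corner, Matrix.mulVec, dotProduct, Fin.sum_univ_two] using this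
  have k3 : x 3 4 * w 0 + x 3 5 * w 1 = 0 := by
    have := congrFun hMw 1
    simpa [corner, Matrix.mulVec, dotProduct, Fin.sum_univ_two] using this
  have k4 : x 4 4 * w 0 + x 4 5 * w 1 = 0 := by
    have := congrFun hMw 2
    simpa [corner, Matrix.mulVec, dotProduct, Fin.sum_univ_two] using this
  have k5 : x 5 4 * w 0 + x 5 5 * w 1 = 0 := by
    have := congrFun hMw 3
    simpa [corner, Matrix.mulVec, dotProduct, Fin.sum_univ_two] using this
  set u : Fin 6 → 𝕂 := ![0, 0, 0, 0, w 0, w 1] with hu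
  have u0 : u 0 = 0 := rfl
  have u1 : u 1 = 0 := rfl
  have u2 : u 2 = 0 := rfl
  have u3 : u 3 = 0 := rfl
  have u4 : u 4 = w 0 := rfl
  have u5 : u 5 = w 1 := rfl
  set z : Fin 6 → 𝕂 := x *ᵥ u with hzdef
  set y : Fin 6 → 𝕂 := q *ᵥ u with hydef
  have hz : ∀ i : Fin 6, z i = x i 4 * w 0 + x i 5 * w 1 := by
    intro i
    simp only [hzdef, Matrix.mulVec, dotProduct, Fin.sum_univ_six, u0, u1, u2, u3, u4, u5]
    ring
  have hy03 : ∀ j : Fin 6, (j : ℕ) < 4 → y j = 0 := by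
    intro j hj
    have h4 : q j 4 = 0 := hq 4 j (by
      have h : ((4 : Fin 6) : ℕ) = 4 := rfl
      rw [h]; omega)
    have h5 : q j 5 = 0 := hq 5 j (by
      have h : ((5 : Fin 6) : ℕ) = 5 := rfl
      rw [h]; omega)
    simp only [hydef, Matrix.mulVec, dotProduct, Fin.sum_univ_six, u0, u1, u2, u3, u4, u5,
      h4, h5]
    ring
  have y0 : y 0 = 0 := hy03 0 (by norm_num)
  have y1 : y 1 = 0 := hy03 1 (by norm_num)
  have y2 : y 2 = 0 := hy03 2 (by decide)
  have y3 : y 3 = 0 := hy03 3 (by decide)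
  have hvec : xRight 𝕂 *ᵥ z = p *ᵥ z + x *ᵥ y := by
    rw [hzdef, hydef, mulVec_mulVec, mulVec_mulVec, mulVec_mulVec, heq, add_mulVec]
  rw [xRight_mulVec] at hvec
  have hxy : ∀ i : Fin 6, (x *ᵥ y) i = x i 4 * y 4 + x i 5 * y 5 := by
    intro i
    simp only [Matrix.mulVec, dotProduct, Fin.sum_univ_six, y0, y1, y2, y3]
    ring
  have z2 : z 2 = 0 := by rw [hz]; exact k2
  have z3 : z 3 = 0 := by rw [hz]; exact k3
  have z4 : z 4 = 0 := by rw [hz]; exact k4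
  have z5 : z 5 = 0 := by rw [hz]; exact k5
  have hpz : ∀ i : Fin 6, 2 ≤ (i : ℕ) → (p *ᵥ z) i = 0 := by
    intro i hi
    have hp0 : p i 0 = 0 := hp i 0 (by
      have h : ((0 : Fin 6) : ℕ) = 0 := rfl
      rw [h]; omega)
    have hp1 : p i 1 = 0 := hp i 1 (by
      have h : ((1 : Fin 6) : ℕ) = 1 := rfl
      rw [h]; omega)
    simp only [Matrix.mulVec, dotProduct, Fin.sum_univ_six, hp0, hp1, z2, z3, z4, z5]
    ring
  -- rows 4 and 5 of the equation
  have e4 : x 4 4 * y 4 + x 4 5 * y 5 = 0 := by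
    have := congrFun hvec 4
    have hl : ![(0:𝕂), 0, z 0, z 1, z 2, z 3] 4 = z 2 := rfl
    rw [hl, z2, Pi.add_apply, hpz 4 (by decide), hxy 4] at this
    simpa using this.symm
  have e5 : x 5 4 * y 4 + x 5 5 * y 5 = 0 := by
    have := congrFun hvec 5
    have hl : ![(0:𝕂), 0, z 0, z 1, z 2, z 3] 5 = z 3 := rfl
    rw [hl, z3, Pi.add_apply, hpz 5 (by decide), hxy 5] at this
    simpa using this.symm
  have hNw : corner 2 2 (by norm_num) (by norm_num) x *ᵥ w = 0 := by
    funext a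
    fin_cases a
    · simpa [corner, Matrix.mulVec, dotProduct, Fin.sum_univ_two] using k4
    · simpa [corner, Matrix.mulVec, dotProduct, Fin.sum_univ_two] using k5
  have hNy : corner 2 2 (by norm_num) (by norm_num) x *ᵥ ![y 4, y 5] = 0 := by
    funext a
    fin_cases a
    · simpa [corner, Matrix.mulVec, dotProduct, Fin.sum_univ_two] using e4
    · simpa [corner, Matrix.mulVec, dotProduct, Fin.sum_univ_two] using e5
  obtain ⟨c, hc⟩ := smul_of_ker_rank_one _ h22 hw0 hNw hNy
  have y4 : y 4 = c * w 0 := by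
    have := congrFun hc 0
    simpa using this
  have y5 : y 5 = c * w 1 := by
    have := congrFun hc 1
    simpa using this
  have z0 : z 0 = 0 := by
    have := congrFun hvec 2
    have hl : ![(0:𝕂), 0, z 0, z 1, z 2, z 3] 2 = z 0 := rfl
    rw [hl, Pi.add_apply, hpz 2 (by decide), hxy 2, y4, y5] at this
    rw [this]
    linear_combination c * k2
  have z1 : z 1 = 0 := by
    have := congrFun hvec 3
    have hl : ![(0:𝕂), 0, z 0, z 1, z 2, z 3] 3 = z 1 := rfl
    rw [hl, Pi.add_apply, hpz 3 (by decide), hxy 3, y4, y5] at this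
    rw [this]
    linear_combination c * k3
  have hz0 : z = 0 := by
    funext i
    fin_cases i
    · exact z0
    · exact z1
    · exact z2
    · exact z3
    · exact z4
    · exact z5
  have hinj : Function.Injective x.mulVec :=
    Matrix.mulVec_injective_iff_isUnit.mpr ((Matrix.isUnit_iff_isUnit_det x).mpr hx)
  have hu0 : u = 0 := by
    apply hinj
    rw [Matrix.mulVec_zero, ← hzdef, hz0]
  have hw00 : w 0 = 0 := by rw [← u4, hu0]; rfl
  have hw01 : w 1 = 0 := by rw [← u5, hu0]; rfl
  apply hw0
  funext a
  fin_cases a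
  · exact hw00
  · exact hw01
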